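/- Annealed linear response decomposition: let P_ε be probability measures on Ω, and suppose: (i) ∫ g dP_ε = ∫ g dP₀ + ε P₀'(g) + o(ε) for every g in a class 𝔉; (ii) for ω in a full-measure set Ω', (h_{ω,ε} − h_ω)(Φ(ω,·)) = ε φ̃(ω) + o(ε) uniformly in ω, where φ̃(ω) = Γ_ω(Φ(ω,·)); (iii) the functions ω ↦ h_ω(Φ(ω,·)) and ω ↦ φ̃(ω) belong to 𝔉, and sup_ε ‖P_ε‖_𝔉 < ∞. Then lim_{ε→0} ε^{-1}( ∫ Φ dμ_ε − ∫ Φ dμ₀ ) = ∫ φ̃ dP₀ + P₀'(ω ↦ h_ω(Φ(ω,·))), where μ_ε(A×B) = ∫_A h_{ω,ε}(B) dP_ε(ω). -/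

import Mathlib

open MeasureTheory Filter Topology Asymptotics

/-- annealed linear response decomposition ('chain rule' of Theorem 4):
lim_{ε→0} ε⁻¹(∫Φ dμ_ε − ∫Φ dμ₀) = ∫ φ̃ dP₀ + P₀'(ω ↦ h_ω(Φ(ω,·))), where
u ε ω = h_{ω,ε}(Φ(ω,·)) and φ̃ ω = Γ_ω(Φ(ω,·)). -/
theorem stmt13 {Ω : Type*} [MeasurableSpace Ω]
    (I : Set ℝ) (hI : (0 : ℝ) ∈ I)
    (P : ℝ → Measure Ω) (hP : ∀ ε ∈ I, IsProbabilityMeasure (P ε))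
    (𝔉 : Set (Ω → ℝ)) (N : (Ω → ℝ) → ℝ) (P' : (Ω → ℝ) → ℝ)
    (u : ℝ → Ω → ℝ) (φt : Ω → ℝ) (Ω' : Set Ω)
    (hΩ' : ∀ ε ∈ I, P ε Ω'ᶜ = 0)
    (hint : ∀ g ∈ 𝔉, ∀ ε ∈ I, Integrable g (P ε))
    -- (i): linear response for ε ↦ P_ε on the class 𝔉
    (hi : ∀ g ∈ 𝔉,
      (fun ε => ∫ ω, g ω ∂P ε - ∫ ω, g ω ∂P 0 - ε * P' g) =o[𝓝[I] 0] fun ε => ε)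
    -- (ii): quenched linear response, uniformly in ω ∈ Ω'
    (r : ℝ → ℝ) (hrnn : ∀ ε, 0 ≤ r ε) (hr : r =o[𝓝[I] 0] fun ε => ε)
    (hii : ∀ ε ∈ I, ∀ ω ∈ Ω', |u ε ω - u 0 ω - ε * φt ω| ≤ r ε)
    -- (iii): membership in 𝔉 and uniform boundedness of the functionals P_ε on 𝔉
    (hmem1 : φt ∈ 𝔉) (hmem2 : u 0 ∈ 𝔉)
    (R : ℝ) (hR : ∀ ε ∈ I, ∀ g ∈ 𝔉, |∫ ω, g ω ∂P ε| ≤ R * N g)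
    (hintu : ∀ ε ∈ I, Integrable (u ε) (P ε)) :
    Tendsto (fun ε => (∫ ω, u ε ω ∂P ε - ∫ ω, u 0 ω ∂P 0) / ε) (𝓝[I \ {0}] 0)
      (𝓝 (∫ ω, φt ω ∂P 0 + P' (u 0))) := by
  have hsub : 𝓝[I \ {0}] (0 : ℝ) ≤ 𝓝[I] 0 := nhdsWithin_mono _ Set.diff_subset
  -- term A: the quenched remainder
  have hA : Tendsto (fun ε => (∫ ω, u ε ω ∂P ε - ∫ ω, u 0 ω ∂P ε
      - ε * ∫ ω, φt ω ∂P ε) / ε) (𝓝[I \ {0}] 0) (𝓝 0) := by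
    have hrd : Tendsto (fun ε => r ε / |ε|) (𝓝[I \ {0}] 0) (𝓝 0) := by
      have h1 : Tendsto (fun ε => r ε / ε) (𝓝[I \ {0}] 0) (𝓝 0) :=
        (hr.tendsto_div_nhds_zero).mono_left hsub
      have h2 := h1.abs
      rw [abs_zero] at h2
      refine h2.congr fun ε => ?_
      rw [abs_div, abs_of_nonneg (hrnn ε)]
    refine squeeze_zero_norm' ?_ hrd
    filter_upwards [self_mem_nhdsWithin] with ε hε
    obtain ⟨hεI, _⟩ := hε
    have hprob := hP ε hεI
    have h1 : Integrable (u ε) (P ε) := hintu ε hεI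
    have h2 : Integrable (u 0) (P ε) := hint _ hmem2 ε hεI
    have h3 : Integrable φt (P ε) := hint _ hmem1 ε hεI
    have h12 : Integrable (fun ω => u ε ω - u 0 ω) (P ε) := h1.sub h2
    have h3' : Integrable (fun ω => ε * φt ω) (P ε) := h3.const_mul ε
    have heq : ∫ ω, u ε ω ∂P ε - ∫ ω, u 0 ω ∂P ε - ε * ∫ ω, φt ω ∂P ε
        = ∫ ω, (u ε ω - u 0 ω - ε * φt ω) ∂P ε := by
      rw [integral_sub h12 h3', integral_sub h1 h2, integral_const_mul]
    have hbnd : ‖∫ ω, (u ε ω - u 0 ω - ε * φt ω) ∂P ε‖ ≤ r ε := by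
      have hae : ∀ᵐ ω ∂P ε, ‖u ε ω - u 0 ω - ε * φt ω‖ ≤ r ε := by
        have : ∀ᵐ ω ∂P ε, ω ∈ Ω' := by
          rw [ae_iff]
          exact hΩ' ε hεI
        filter_upwards [this] with ω hω
        simpa [Real.norm_eq_abs] using hii ε hεI ω hω
      calc ‖∫ ω, (u ε ω - u 0 ω - ε * φt ω) ∂P ε‖
          ≤ r ε * ((P ε) Set.univ).toReal := norm_integral_le_of_norm_le_const hae
        _ = r ε := by simp
    rw [Real.norm_eq_abs, abs_div, heq]
    exact div_le_div_of_nonneg_right hbnd (abs_nonneg ε) |>.trans_eq rfl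
  -- term B: ∫ φt dP_ε → ∫ φt dP_0
  have hB : Tendsto (fun ε => ∫ ω, φt ω ∂P ε) (𝓝[I \ {0}] 0)
      (𝓝 (∫ ω, φt ω ∂P 0)) := by
    have hid : Tendsto (fun ε : ℝ => ε) (𝓝[I] 0) (𝓝 0) :=
      tendsto_id.mono_left nhdsWithin_le_nhds
    have h0 : Tendsto (fun ε => ∫ ω, φt ω ∂P ε - ∫ ω, φt ω ∂P 0 - ε * P' φt)
        (𝓝[I] 0) (𝓝 0) := (hi φt hmem1).isBigO.trans_tendsto hid
    have h1 : Tendsto (fun ε => (∫ ω, φt ω ∂P ε - ∫ ω, φt ω ∂P 0 - ε * P' φt)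
        + ε * P' φt + ∫ ω, φt ω ∂P 0) (𝓝[I] 0)
        (𝓝 (0 + 0 * P' φt + ∫ ω, φt ω ∂P 0)) :=
      (h0.add (hid.mul tendsto_const_nhds)).add tendsto_const_nhds
    simp only [zero_mul, add_zero, zero_add] at h1
    refine (h1.mono_left hsub).congr fun ε => by ring
  -- term C: (∫ u0 dP_ε − ∫ u0 dP_0)/ε → P'(u 0)
  have hC : Tendsto (fun ε => (∫ ω, u 0 ω ∂P ε - ∫ ω, u 0 ω ∂P 0) / ε)
      (𝓝[I \ {0}] 0) (𝓝 (P' (u 0))) := by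
    have h0 : Tendsto (fun ε => (∫ ω, u 0 ω ∂P ε - ∫ ω, u 0 ω ∂P 0
        - ε * P' (u 0)) / ε) (𝓝[I \ {0}] 0) (𝓝 0) :=
      ((hi (u 0) hmem2).tendsto_div_nhds_zero).mono_left hsub
    have h1 := h0.add (tendsto_const_nhds (x := P' (u 0))
      (f := 𝓝[I \ {0}] (0 : ℝ)))
    rw [zero_add] at h1
    refine Tendsto.congr' ?_ h1
    filter_upwards [self_mem_nhdsWithin] with ε hε
    obtain ⟨_, hε0⟩ := hε
    have hε0' : ε ≠ 0 := by simpa using hε0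
    field_simp
    ring
  have hsum := (hA.add hB).add hC
  rw [zero_add] at hsum
  refine Tendsto.congr' ?_ hsum
  filter_upwards [self_mem_nhdsWithin] with ε hε
  obtain ⟨_, hε0⟩ := hε
  have hε0' : ε ≠ 0 := by simpa using hε0
  field_simp
  ring
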